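/- Let n ≥ 2, let A = (a_{ij}) be a symmetric positive-definite real n×n matrix, let b = (b_i) be a nonzero covector, and let c ∈ ℝ. Then there exists an index k such that there do NOT exist a linear form f_k on ℝⁿ and a constant g_k ∈ ℝ with α(y)²·b_k − β(y)·ȳ_k = (f_k(y) + g_k·α(y))·(β(y) + c·α(y)) for all y ∈ ℝⁿ. (Equivalently: for some k, the expression α·b_k − s·ȳ_k with s = β/α is not divisible by s + c.) -/

import Mathlib

open scoped BigOperators
open Matrix

noncomputable section

/-- `α(y) = √(a_{ij} yⁱ yʲ)`. -/
def alphaOf {n : ℕ} (A : Matrix (Fin n) (Fin n) ℝ) (y : Fin n → ℝ) : ℝ :=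
  Real.sqrt (∑ i, ∑ j, A i j * y i * y j)

/-- `β(y) = b_i yⁱ`. -/
def betaOf {n : ℕ} (b : Fin n → ℝ) (y : Fin n → ℝ) : ℝ := ∑ i, b i * y i

/-- `ȳ_k = a_{kj} yʲ`. -/
def lowered {n : ℕ} (A : Matrix (Fin n) (Fin n) ℝ) (k : Fin n) (y : Fin n → ℝ) : ℝ :=
  ∑ j, A k j * y j

/-- auxiliary quadratic form -/
def quadOf {n : ℕ} (A : Matrix (Fin n) (Fin n) ℝ) (y : Fin n → ℝ) : ℝ :=
  ∑ i, ∑ j, A i j * y i * y j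

lemma quadOf_eq_dot {n : ℕ} (A : Matrix (Fin n) (Fin n) ℝ) (y : Fin n → ℝ) :
    quadOf A y = y ⬝ᵥ A *ᵥ y := by
  unfold quadOf
  simp only [dotProduct, Matrix.mulVec, Finset.mul_sum]
  exact Finset.sum_congr rfl fun i _ => Finset.sum_congr rfl fun j _ => by ring

lemma quadOf_pos {n : ℕ} {A : Matrix (Fin n) (Fin n) ℝ} (hpos : A.PosDef)
    {y : Fin n → ℝ} (hy : y ≠ 0) : 0 < quadOf A y := by
  rw [quadOf_eq_dot]
  simpa using hpos.dotProduct_mulVec_pos hy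

lemma quadOf_nonneg {n : ℕ} {A : Matrix (Fin n) (Fin n) ℝ} (hpos : A.PosDef)
    (y : Fin n → ℝ) : 0 ≤ quadOf A y := by
  by_cases hy : y = 0
  · subst hy; simp [quadOf]
  · exact le_of_lt (quadOf_pos hpos hy)

lemma alphaOf_sq {n : ℕ} {A : Matrix (Fin n) (Fin n) ℝ} (hpos : A.PosDef)
    (y : Fin n → ℝ) : (alphaOf A y) ^ 2 = quadOf A y :=
  Real.sq_sqrt (quadOf_nonneg hpos y)

lemma alphaOf_pos {n : ℕ} {A : Matrix (Fin n) (Fin n) ℝ} (hpos : A.PosDef)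
    {y : Fin n → ℝ} (hy : y ≠ 0) : 0 < alphaOf A y :=
  Real.sqrt_pos.mpr (quadOf_pos hpos hy)

lemma alphaOf_neg {n : ℕ} (A : Matrix (Fin n) (Fin n) ℝ) (y : Fin n → ℝ) :
    alphaOf A (-y) = alphaOf A y := by
  unfold alphaOf
  congr 1
  exact Finset.sum_congr rfl fun i _ => Finset.sum_congr rfl fun j _ => by
    simp [Pi.neg_apply, mul_neg, neg_mul, neg_neg]

lemma lin_neg {n : ℕ} (d y : Fin n → ℝ) :
    (∑ i, d i * (-y) i) = -∑ i, d i * y i := by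
  simp [Pi.neg_apply, mul_neg]

lemma betaOf_neg {n : ℕ} (b y : Fin n → ℝ) : betaOf b (-y) = -betaOf b y := by
  unfold betaOf; exact lin_neg b y

lemma lowered_neg {n : ℕ} (A : Matrix (Fin n) (Fin n) ℝ) (k : Fin n) (y : Fin n → ℝ) :
    lowered A k (-y) = -lowered A k y := by
  unfold lowered; exact lin_neg (A k) y

lemma lin_add {n : ℕ} (d x y : Fin n → ℝ) :
    (∑ i, d i * (x i + y i)) = (∑ i, d i * x i) + ∑ i, d i * y i := by
  rw [← Finset.sum_add_distrib]
  exact Finset.sum_congr rfl fun i _ => by ring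

lemma lin_sub {n : ℕ} (d x y : Fin n → ℝ) :
    (∑ i, d i * (x i - y i)) = (∑ i, d i * x i) - ∑ i, d i * y i := by
  rw [← Finset.sum_sub_distrib]
  exact Finset.sum_congr rfl fun i _ => by ring

lemma key_factor {n : ℕ} (bb d y₁ : Fin n → ℝ)
    (hy₁ : (∑ i, bb i * y₁ i) ≠ 0)
    (h : ∀ y : Fin n → ℝ, (∑ i, bb i * y i) * (∑ i, d i * y i) = 0) :
    ∀ y : Fin n → ℝ, (∑ i, d i * y i) = 0 := by
  intro y
  by_cases hB : (∑ i, bb i * y i) = 0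
  · have h1 := h (fun i => y i + y₁ i)
    have h2 := h (fun i => y i - y₁ i)
    simp only [lin_add, lin_sub] at h1 h2
    rw [hB] at h1 h2
    have h1' : (∑ i, d i * y i) + (∑ i, d i * y₁ i) = 0 := by
      rcases mul_eq_zero.mp h1 with h' | h'
      · exact absurd (by linarith) hy₁
      · exact h'
    have h2' : (∑ i, d i * y i) - (∑ i, d i * y₁ i) = 0 := by
      rcases mul_eq_zero.mp h2 with h' | h'
      · exact absurd (by linarith) hy₁
      · exact h'
    linarith
  · rcases mul_eq_zero.mp (h y) with h' | h'
    · exact absurd h' hB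
    · exact h'

/-- Lemma 3.1: for a positive-definite symmetric `A`, a nonzero covector `b` and any
scalar `c`, for some index `k` the expression `α b_k − s ȳ_k` (with `s = β/α`) is not
divisible by `s + c`, i.e. there is no identity
`α² b_k − β ȳ_k = (f_k(y) + g_k α)(β + c α)`. -/
theorem stmt_3 {n : ℕ} (hn : 2 ≤ n) (A : Matrix (Fin n) (Fin n) ℝ)
    (hsym : A.IsSymm) (hpos : A.PosDef) (b : Fin n → ℝ) (hb : b ≠ 0) (c : ℝ) :
    ∃ k : Fin n, ¬ ∃ (f : Fin n → ℝ) (g : ℝ), ∀ y : Fin n → ℝ,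
      (alphaOf A y)^2 * b k - betaOf b y * lowered A k y =
        ((∑ i, f i * y i) + g * alphaOf A y) * (betaOf b y + c * alphaOf A y) := by
  by_contra hcon
  push_neg at hcon
  choose f g hfg using hcon
  -- pick i with b i ≠ 0 and j ≠ i
  obtain ⟨i, hi⟩ := Function.ne_iff.mp hb
  simp only [Pi.zero_apply] at hi
  have hnt : Nontrivial (Fin n) := Fin.nontrivial_iff_two_le.mpr hn
  obtain ⟨j, hj⟩ := exists_ne i
  -- y₀ : nonzero vector with β y₀ = 0
  set y₀ : Fin n → ℝ :=
    fun m => b i * (if m = j then 1 else 0) - b j * (if m = i then 1 else 0) with hy₀def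
  have hy₀β : betaOf b y₀ = 0 := by
    unfold betaOf
    simp [hy₀def, mul_sub, mul_ite, mul_one, mul_zero, Finset.sum_sub_distrib,
      Finset.sum_ite_eq']
    ring
  have hy₀ : y₀ ≠ 0 := by
    intro h0
    apply hi
    have := congrFun h0 j
    simpa [hy₀def, hj] using this
  -- y₁ : vector with β y₁ ≠ 0
  set y₁ : Fin n → ℝ := fun m => if m = i then 1 else 0 with hy₁def
  have hy₁β : (∑ m, b m * y₁ m) = b i := by
    simp [hy₁def, mul_ite, mul_one, mul_zero, Finset.sum_ite_eq']
  -- Step 1: even/odd splitting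
  have H1 : ∀ k (y : Fin n → ℝ),
      c * (∑ m, f k m * y m) + g k * betaOf b y = 0 := by
    intro k y
    by_cases hy : y = 0
    · subst hy; simp [betaOf]
    · have e1 := hfg k y
      have e2 := hfg k (-y)
      rw [alphaOf_neg, betaOf_neg, lowered_neg, lin_neg] at e2
      have hsub : (2 * alphaOf A y) * (c * (∑ m, f k m * y m) + g k * betaOf b y) = 0 := by
        linear_combination e2 - e1
      rcases mul_eq_zero.mp hsub with h' | h'
      · exact absurd h' (ne_of_gt (by have := alphaOf_pos hpos hy; linarith))
      · exact h'
  -- Step 2: the polynomial part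
  have H2 : ∀ k (y : Fin n → ℝ),
      (alphaOf A y) ^ 2 * (b k - c * g k)
        = betaOf b y * ((∑ m, f k m * y m) + lowered A k y) := by
    intro k y
    linear_combination (hfg k y) + alphaOf A y * (H1 k y)
  -- Step 3: b k = c * g k
  have H3 : ∀ k, b k = c * g k := by
    intro k
    have h := H2 k y₀
    rw [hy₀β, zero_mul, alphaOf_sq hpos] at h
    rcases mul_eq_zero.mp h with h' | h'
    · exact absurd h' (ne_of_gt (quadOf_pos hpos hy₀))
    · linarith
  -- Step 4: β * (f + ȳ) = 0 everywhere, hence f + ȳ = 0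
  have H4 : ∀ k (y : Fin n → ℝ), (∑ m, (f k m + A k m) * y m) = 0 := by
    intro k
    apply key_factor b _ y₁ (by rw [hy₁β]; exact hi)
    intro y
    have h := H2 k y
    rw [H3 k] at h
    have h' : betaOf b y * ((∑ m, f k m * y m) + lowered A k y) = 0 := by
      rw [← h]; ring
    calc (∑ m, b m * y m) * (∑ m, (f k m + A k m) * y m)
        = betaOf b y * ((∑ m, f k m * y m) + lowered A k y) := by
          unfold betaOf lowered
          rw [← Finset.sum_add_distrib]
          congr 1
          exact Finset.sum_congr rfl fun m _ => by ring
      _ = 0 := h'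
  -- conclude
  by_cases hc : c = 0
  · apply hb
    funext k
    rw [Pi.zero_apply, H3 k, hc, zero_mul]
  · -- c ≠ 0 : then lowered A k y₀ = 0 for every k, contradicting positivity
    have hL0 : ∀ k, (∑ m, f k m * y₀ m) = 0 := by
      intro k
      have h := H1 k y₀
      rw [hy₀β, mul_zero, add_zero] at h
      exact (mul_eq_zero.mp h).resolve_left hc
    have hlow0 : ∀ k, lowered A k y₀ = 0 := by
      intro k
      have h := H4 k y₀
      have hsplit : (∑ m, (f k m + A k m) * y₀ m)
          = (∑ m, f k m * y₀ m) + lowered A k y₀ := by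
        unfold lowered
        rw [← Finset.sum_add_distrib]
        exact Finset.sum_congr rfl fun m _ => by ring
      rw [hsplit, hL0 k, zero_add] at h
      exact h
    have hQ0 : quadOf A y₀ = 0 := by
      have hq : quadOf A y₀ = ∑ m, y₀ m * lowered A m y₀ := by
        unfold quadOf lowered
        exact Finset.sum_congr rfl fun m _ => by
          rw [Finset.mul_sum]
          exact Finset.sum_congr rfl fun l _ => by ring
      rw [hq]
      simp [hlow0]
    exact absurd hQ0 (ne_of_gt (quadOf_pos hpos hy₀))
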